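/- For every integer p with 0 ≤ p ≤ n − 1: l_p† ≥ 2 if and only if p ∈ S; and when this is the case, there exists an index j with s_j = p and t_j = a_2^{(p)†} = d†(p), so the pair (p, d†(p)) is one of the given relation intervals [s_j, t_j]. -/
import Mathlib


/-- `d(p) = max { s j : t j ≤ p }`, with `⊥` meaning "undefined" (i.e. `-∞`). -/
noncomputable def dvalue (m : ℕ) (s t : ℕ → ℤ) (p : ℤ) : WithBot ℤ :=
  ((Finset.range m).filter (fun j => t j ≤ p)).sup (fun j => (s j : WithBot ℤ))

/-- `d†(p) = min { t j : s j ≥ p }`, with `⊤` meaning "undefined" (i.e. `+∞`). -/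
noncomputable def ddual (m : ℕ) (s t : ℕ → ℤ) (p : ℤ) : WithTop ℤ :=
  ((Finset.range m).filter (fun j => p ≤ s j)).inf (fun j => (t j : WithTop ℤ))

/-- The extension of `d` to `WithBot ℤ`, sending `⊥` to `⊥`. -/
noncomputable def dW (m : ℕ) (s t : ℕ → ℤ) : WithBot ℤ → WithBot ℤ :=
  WithBot.recBotCoe ⊥ (dvalue m s t)

/-- The extension of `d†` to `WithTop ℤ`, sending `⊤` to `⊤`. -/
noncomputable def dtW (m : ℕ) (s t : ℕ → ℤ) : WithTop ℤ → WithTop ℤ :=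
  WithTop.recTopCoe ⊤ (ddual m s t)

/-- The (total extension of the) sequence `a_i^{(p)}`:
`a_0 = p`, `a_1 = p - 1`, `a_{i+2} = d(a_i)`.  For `i ≤ l_p` this agrees with the
sequence of the paper. -/
noncomputable def aSeq (m : ℕ) (s t : ℕ → ℤ) (p : ℤ) : ℕ → WithBot ℤ
  | 0 => (p : WithBot ℤ)
  | 1 => ((p - 1 : ℤ) : WithBot ℤ)
  | i + 2 => dW m s t (aSeq m s t p i)

/-- The length `l_p`: `l_0 = 0`, and for `p ≠ 0` it is the least `j ≥ 1` with
`d(a_{j-1}^{(p)}) = d(a_j^{(p)})` (undefined values compared as `⊥`). -/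
noncomputable def lSeq (m : ℕ) (s t : ℕ → ℤ) (p : ℤ) : ℕ :=
  if p = 0 then 0
  else sInf {j : ℕ | 1 ≤ j ∧ dW m s t (aSeq m s t p (j - 1)) = dW m s t (aSeq m s t p j)}

/-- The (total extension of the) dual sequence `a_i^{(p)†}`:
`a_0 = p`, `a_1 = p + 1`, `a_{i+2} = d†(a_i)`. -/
noncomputable def aSeqD (m : ℕ) (s t : ℕ → ℤ) (p : ℤ) : ℕ → WithTop ℤ
  | 0 => (p : WithTop ℤ)
  | 1 => ((p + 1 : ℤ) : WithTop ℤ)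
  | i + 2 => dtW m s t (aSeqD m s t p i)

/-- The dual length `l_p†`: `l_n† = 0`, and for `p ≠ n` it is the least `j ≥ 1` with
`d†(a_{j-1}^{(p)†}) = d†(a_j^{(p)†})` (undefined values compared as `⊤`). -/
noncomputable def lSeqD (n : ℤ) (m : ℕ) (s t : ℕ → ℤ) (p : ℤ) : ℕ :=
  if p = n then 0
  else sInf {j : ℕ | 1 ≤ j ∧ dtW m s t (aSeqD m s t p (j - 1)) = dtW m s t (aSeqD m s t p j)}


section Aux

variable (m : ℕ) (s t : ℕ → ℤ)

lemma ddual_eq_of_sj (hsmono : ∀ i j : ℕ, i < j → j < m → s i < s j)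
    (htmono : ∀ i j : ℕ, i < j → j < m → t i < t j)
    {p : ℤ} {j : ℕ} (hj : j < m) (hjs : s j = p) :
    ddual m s t p = (t j : WithTop ℤ) := by
  apply le_antisymm
  · exact Finset.inf_le (by simp only [Finset.mem_filter, Finset.mem_range]; exact ⟨hj, hjs.ge⟩)
  · apply Finset.le_inf
    intro k hk
    simp only [Finset.mem_filter, Finset.mem_range] at hk
    rcases lt_trichotomy k j with h | h | h
    · exact absurd (hsmono k j h hj) (by omega)
    · subst h; exact le_refl _
    · exact_mod_cast (htmono j k h hk.1).le

lemma ddual_eq_of_not (p : ℤ) (h : ∀ j, j < m → s j ≠ p) :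
    ddual m s t p = ddual m s t (p + 1) := by
  unfold ddual
  congr 1
  apply Finset.filter_congr
  intro k hk
  simp only [Finset.mem_range] at hk
  have h2 : s k ≠ p := h k hk
  constructor <;> intro <;> omega

lemma ddual_lt (hsmono : ∀ i j : ℕ, i < j → j < m → s i < s j)
    (htmono : ∀ i j : ℕ, i < j → j < m → t i < t j)
    {p : ℤ} {j : ℕ} (hj : j < m) (hjs : s j = p) :
    (t j : WithTop ℤ) < ddual m s t (p + 1) := by
  rw [ddual]
  rw [Finset.lt_inf_iff (WithTop.coe_lt_top (t j))]
  intro k hk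
  simp only [Finset.mem_filter, Finset.mem_range] at hk
  have hjk : j < k := by
    rcases lt_trichotomy j k with h | h | h
    · exact h
    · subst h; omega
    · exact absurd (hsmono k j h hj) (by omega)
  exact_mod_cast htmono j k hjk hk.1

lemma le_dtW (c : ℤ) (hlen : ∀ j : ℕ, j < m → s j + 2 ≤ t j)
    (x : WithTop ℤ) (hx : (c : WithTop ℤ) ≤ x) :
    ((c + 2 : ℤ) : WithTop ℤ) ≤ dtW m s t x := by
  induction x using WithTop.recTopCoe with
  | top => exact le_top
  | coe q =>
    have hcq : c ≤ q := by exact_mod_cast hx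
    show _ ≤ ddual m s t q
    apply Finset.le_inf
    intro k hk
    simp only [Finset.mem_filter, Finset.mem_range] at hk
    have := hlen k hk.1
    exact_mod_cast (by omega : c + 2 ≤ t k)

lemma dtW_eq_top (n : ℤ) (htn : ∀ j : ℕ, j < m → t j ≤ n)
    (hlen : ∀ j : ℕ, j < m → s j + 2 ≤ t j)
    (x : WithTop ℤ) (hx : ((n - 1 : ℤ) : WithTop ℤ) ≤ x) :
    dtW m s t x = ⊤ := by
  induction x using WithTop.recTopCoe with
  | top => rfl
  | coe q =>
    have hq : n - 1 ≤ q := by exact_mod_cast hx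
    show ddual m s t q = ⊤
    rw [ddual, Finset.filter_eq_empty_iff.mpr, Finset.inf_empty]
    intro k hk
    simp only [Finset.mem_range] at hk
    have := htn k hk
    have := hlen k hk
    omega

lemma aSeqD_ge (p : ℤ) (hlen : ∀ j : ℕ, j < m → s j + 2 ≤ t j) :
    ∀ i : ℕ, ((p - 1 + i : ℤ) : WithTop ℤ) ≤ aSeqD m s t p i
  | 0 => by
      show ((p - 1 + 0 : ℤ) : WithTop ℤ) ≤ (p : WithTop ℤ)
      exact_mod_cast by omega
  | 1 => by
      show ((p - 1 + 1 : ℤ) : WithTop ℤ) ≤ ((p + 1 : ℤ) : WithTop ℤ)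
      exact_mod_cast by omega
  | (i + 2) => by
      show _ ≤ dtW m s t (aSeqD m s t p i)
      have h := le_dtW m s t (p - 1 + i) hlen _ (aSeqD_ge p hlen i)
      have e : (p - 1 + ((i + 2 : ℕ) : ℤ)) = (p - 1 + (i : ℤ)) + 2 := by push_cast; ring
      rw [e]
      exact h

end Aux

theorem lpdual_ge_two_iff_mem_S
    (n : ℤ) (m : ℕ) (s t : ℕ → ℤ)
    (hn : 0 ≤ n)
    (hsmono : ∀ i j : ℕ, i < j → j < m → s i < s j)
    (htmono : ∀ i j : ℕ, i < j → j < m → t i < t j)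
    (hs0 : ∀ j : ℕ, j < m → 0 ≤ s j)
    (htn : ∀ j : ℕ, j < m → t j ≤ n)
    (hlen : ∀ j : ℕ, j < m → s j + 2 ≤ t j)
    (p : ℤ) (hp0 : 0 ≤ p) (hpn : p ≤ n - 1) :
    (2 ≤ lSeqD n m s t p ↔ ∃ j : ℕ, j < m ∧ s j = p) ∧
    (2 ≤ lSeqD n m s t p →
      ∃ j : ℕ, j < m ∧ s j = p ∧ (t j : WithTop ℤ) = aSeqD m s t p 2 ∧
        (t j : WithTop ℤ) = ddual m s t p) := by
  have hpn' : p ≠ n := by omega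
  set A : Set ℕ :=
    {j : ℕ | 1 ≤ j ∧ dtW m s t (aSeqD m s t p (j - 1)) = dtW m s t (aSeqD m s t p j)} with hA
  have hl : lSeqD n m s t p = sInf A := if_neg hpn'
  have ha0 : dtW m s t (aSeqD m s t p 0) = ddual m s t p := rfl
  have ha1 : dtW m s t (aSeqD m s t p 1) = ddual m s t (p + 1) := rfl
  have ha2 : aSeqD m s t p 2 = ddual m s t p := rfl
  have hiff : (2 ≤ lSeqD n m s t p) ↔ ∃ j : ℕ, j < m ∧ s j = p := by
    rw [hl]
    constructor
    · intro h2
      by_contra hne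
      push_neg at hne
      have h1 : (1 : ℕ) ∈ A := by
        refine ⟨le_refl 1, ?_⟩
        show dtW m s t (aSeqD m s t p 0) = dtW m s t (aSeqD m s t p 1)
        rw [ha0, ha1]
        exact ddual_eq_of_not m s t p fun j hj => hne j hj
      exact absurd (Nat.sInf_le h1) (by omega)
    · rintro ⟨j, hj, hjs⟩
      have hdp : ddual m s t p = (t j : WithTop ℤ) :=
        ddual_eq_of_sj m s t hsmono htmono hj hjs
      have hdlt : (t j : WithTop ℤ) < ddual m s t (p + 1) :=
        ddual_lt m s t hsmono htmono hj hjs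
      set N : ℕ := (n - p).toNat with hN
      have hmem : N + 1 ∈ A := by
        refine ⟨by omega, ?_⟩
        have e1 : dtW m s t (aSeqD m s t p (N + 1 - 1)) = ⊤ := by
          apply dtW_eq_top m s t n htn hlen
          refine le_trans ?_ (aSeqD_ge m s t p hlen N)
          exact WithTop.coe_le_coe.mpr (by omega)
        have e2 : dtW m s t (aSeqD m s t p (N + 1)) = ⊤ := by
          apply dtW_eq_top m s t n htn hlen
          refine le_trans ?_ (aSeqD_ge m s t p hlen (N + 1))
          exact WithTop.coe_le_coe.mpr (by push_cast; omega)
        rw [e1, e2]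
      apply le_csInf ⟨N + 1, hmem⟩
      rintro b ⟨hb1, hb2⟩
      by_contra hlt
      have hb1' : b = 1 := by omega
      subst hb1'
      rw [(by rfl : (1 : ℕ) - 1 = 0), ha0, ha1, hdp] at hb2
      exact hdlt.ne hb2
  refine ⟨hiff, fun h2 => ?_⟩
  obtain ⟨j, hj, hjs⟩ := hiff.mp h2
  have hdp : ddual m s t p = (t j : WithTop ℤ) :=
    ddual_eq_of_sj m s t hsmono htmono hj hjs
  exact ⟨j, hj, hjs, by rw [ha2, hdp], hdp.symm⟩
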